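/- Let m ≥ 2, n ≥ 2 and set g := (n−1)·m(m−1)/2 − (m−1); assume g ≥ 1. Note that g = ∑_{k=2}^m ((k−1)(n−1) − 1), so the pairs (k, a) with 2 ≤ k ≤ m and 0 ≤ a ≤ (k−1)(n−1) − 2 number exactly g. Consider the g×g matrix M(γ, μ), depending on complex parameters γ_1,…,γ_g, μ_1,…,μ_g, whose rows are indexed by s ∈ {1,…,g}, whose columns are indexed by the pairs (k, a) above, and whose (s, (k,a)) entry is μ_s^{m−k} · γ_s^a. Then det M(γ, μ) is not identically zero: there exist complex values of γ_1,…,γ_g, μ_1,…,μ_g for which M(γ, μ) is invertible. -/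

import Mathlib

open Matrix

/-- Point-picking lemma: a linearly independent family of functions admits evaluation
points making the evaluation matrix nonsingular. -/
lemma exists_points_det_ne_zero {F α ι : Type*} [Field F] [Fintype ι] [DecidableEq ι]
    (f : ι → α → F) (hf : LinearIndependent F f) :
    ∃ x : ι → α, (Matrix.of fun i j => f j (x i)).det ≠ 0 := by
  classical
  set v : α → (ι → F) := fun a i => f i a with hv
  -- Step 1: the evaluation vectors span the whole space.
  have hspan : Submodule.span F (Set.range v) = ⊤ := by
    by_contra h
    obtain ⟨φ, hφ, hker⟩ := Submodule.exists_dual_map_eq_bot_of_lt_top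
      (p := Submodule.span F (Set.range v)) (lt_top_iff_ne_top.2 h) inferInstance
    set g : ι → F := fun i => φ (Pi.single i 1) with hgdef
    have hφw : ∀ w : ι → F, φ w = ∑ i, w i * g i := by
      intro w
      conv_lhs => rw [← Finset.univ_sum_single w]
      rw [map_sum]
      refine Finset.sum_congr rfl fun i _ => ?_
      have hsingle : (Pi.single i (w i) : ι → F) = w i • (Pi.single i 1 : ι → F) := by
        rw [← Pi.single_smul, smul_eq_mul, mul_one]
      rw [hsingle, _root_.map_smul, smul_eq_mul]
    have hgz : ∀ a, ∑ i, f i a * g i = 0 := by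
      intro a
      have hmem : v a ∈ Submodule.span F (Set.range v) :=
        Submodule.subset_span ⟨a, rfl⟩
      have : φ (v a) = 0 := by
        have : φ (v a) ∈ (Submodule.span F (Set.range v)).map φ :=
          Submodule.mem_map_of_mem hmem
        rwa [hker, Submodule.mem_bot] at this
      rw [hφw] at this
      simpa [hv] using this
    have hcomb : ∑ i, g i • f i = 0 := by
      ext a
      simpa [Finset.sum_apply, mul_comm] using hgz a
    have : ∀ i, g i = 0 := Fintype.linearIndependent_iff.1 hf g hcomb
    apply hφ
    refine LinearMap.ext fun w => ?_
    rw [hφw]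
    simp [this]
  -- Step 2: extract a basis from the spanning set.
  obtain ⟨b, hbsub, hbspan, hbind⟩ := exists_linearIndependent F (Set.range v)
  rw [hspan] at hbspan
  let B : Module.Basis b F (ι → F) := Module.Basis.mk hbind (by rw [Subtype.range_coe]; exact hbspan.ge)
  haveI : Fintype b := FiniteDimensional.fintypeBasisIndex B
  have hcard : Fintype.card b = Fintype.card ι := by
    rw [← Module.finrank_eq_card_basis B, Module.finrank_pi]
  let e : ι ≃ b := Fintype.equivOfCardEq (by rw [hcard])
  -- choose preimages under v
  have hchoice : ∀ i : ι, ∃ a : α, v a = (e i : ι → F) := fun i => hbsub (e i).2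
  choose x hx using hchoice
  refine ⟨x, ?_⟩
  intro hdet
  obtain ⟨w, hw0, hwM⟩ := Matrix.exists_vecMul_eq_zero_iff.2 hdet
  -- rows of the matrix are the basis vectors (e i), linearly independent
  have hrows : LinearIndependent F (fun i : ι => ((e i : ι → F))) := by
    have := B.linearIndependent
    rw [Module.Basis.coe_mk] at this
    exact this.comp e e.injective
  have hcombz : ∑ i, w i • ((e i : ι → F)) = 0 := by
    ext j
    have := congrFun hwM j
    simpa [Matrix.vecMul, dotProduct, Finset.sum_apply, hv, ← hx,
      smul_eq_mul] using this
  have : ∀ i, w i = 0 := Fintype.linearIndependent_iff.1 hrows w hcombz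
  exact hw0 (funext this)

/-- Distinct power functions `z ↦ z ^ e i` are linearly independent over `ℂ`. -/
lemma linearIndependent_pow_fun {ι : Type*} (e : ι → ℕ) (he : Function.Injective e) :
    LinearIndependent ℂ (fun i => (fun z : ℂ => z ^ (e i))) := by
  let L : Polynomial ℂ →ₗ[ℂ] (ℂ → ℂ) :=
    { toFun := fun p z => p.eval z
      map_add' := fun p q => funext fun z => by simp
      map_smul' := fun c p => funext fun z => by simp }
  have hker : LinearMap.ker L = ⊥ := by
    rw [LinearMap.ker_eq_bot']
    intro p hp
    exact Polynomial.zero_of_eval_zero p (fun z => congrFun hp z)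
  have hmono : LinearIndependent ℂ (fun i => (Polynomial.X : Polynomial ℂ) ^ (e i)) := by
    have hb := (Polynomial.basisMonomials ℂ).linearIndependent
    have := hb.comp e he
    simp only [Polynomial.X_pow_eq_monomial]
    exact this
  have := hmono.map' L hker
  convert this using 2 with i
  funext z
  simp [L]
  all_goals rfl

theorem sum_card_eq (m n : ℕ) (hm : 2 ≤ m) (hn : 2 ≤ n) :
    ∑ k ∈ Finset.range (m - 1), ((k + 1) * (n - 1) - 1)
      = (n - 1) * (m * (m - 1) / 2) - (m - 1) := by
  have h1' : ∀ k, 1 ≤ (k + 1) * (n - 1) := by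
    intro k
    have : 1 * 1 ≤ (k + 1) * (n - 1) := Nat.mul_le_mul (by omega) (by omega)
    simpa using this
  have hsum : ∑ k ∈ Finset.range (m - 1), ((k + 1) * (n - 1) - 1) + (m - 1)
      = ∑ k ∈ Finset.range (m - 1), (k + 1) * (n - 1) := by
    calc ∑ k ∈ Finset.range (m - 1), ((k + 1) * (n - 1) - 1) + (m - 1)
        = ∑ k ∈ Finset.range (m - 1), ((k + 1) * (n - 1) - 1)
          + ∑ _k ∈ Finset.range (m - 1), 1 := by simp
      _ = ∑ k ∈ Finset.range (m - 1), (((k + 1) * (n - 1) - 1) + 1) :=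
          Finset.sum_add_distrib.symm
      _ = ∑ k ∈ Finset.range (m - 1), (k + 1) * (n - 1) :=
          Finset.sum_congr rfl fun k _ => by have := h1' k; omega
  have hsum2 : ∑ k ∈ Finset.range (m - 1), (k + 1) * (n - 1)
      = (n - 1) * (m * (m - 1) / 2) := by
    rw [← Finset.sum_mul]
    have : ∑ k ∈ Finset.range (m - 1), (k + 1) = ∑ i ∈ Finset.range m, i := by
      obtain ⟨m', rfl⟩ : ∃ m', m = m' + 1 := ⟨m - 1, by omega⟩
      rw [Finset.sum_range_succ' (fun i => i) m']
      simp
    rw [this, Finset.sum_range_id, mul_comm]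
  omega

/-- Genericity of the interpolation determinant: the index type of pairs `(k,a)` with
`2 ≤ k ≤ m`, `0 ≤ a ≤ (k−1)(n−1)−2` has exactly `g = (n−1)m(m−1)/2 − (m−1)` elements,
and there exist complex values `γ_s, μ_s` for which the `g×g` matrix with entries
`μ_s^{m−k} γ_s^a` is invertible. -/
theorem stmt_19 (m n g : ℕ) (hm : 2 ≤ m) (hn : 2 ≤ n)
    (hg : g = (n - 1) * (m * (m - 1) / 2) - (m - 1)) (hg1 : 1 ≤ g) :
    Fintype.card (Σ k : Fin (m - 1), Fin (((k : ℕ) + 1) * (n - 1) - 1)) = g ∧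
    ∃ γ μ : (Σ k : Fin (m - 1), Fin (((k : ℕ) + 1) * (n - 1) - 1)) → ℂ,
      (Matrix.of fun s c : (Σ k : Fin (m - 1), Fin (((k : ℕ) + 1) * (n - 1) - 1)) =>
          μ s ^ (m - ((c.1 : ℕ) + 2)) * γ s ^ (c.2 : ℕ)).det ≠ 0 := by
  classical
  set I := (Σ k : Fin (m - 1), Fin (((k : ℕ) + 1) * (n - 1) - 1)) with hI
  constructor
  · rw [Fintype.card_sigma]
    simp only [Fintype.card_fin]
    rw [Fin.sum_univ_eq_sum_range (fun k => (k + 1) * (n - 1) - 1) (m - 1)]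
    rw [sum_card_eq m n hm hn, hg]
  · set N : ℕ := m * n with hN
    have hbound : ∀ c : I, (c.2 : ℕ) < N := by
      rintro ⟨k, a⟩
      have ha : (a : ℕ) < ((k : ℕ) + 1) * (n - 1) - 1 := a.2
      have hk : (k : ℕ) < m - 1 := k.2
      have h2 : ((k : ℕ) + 1) * (n - 1) ≤ (m - 1) * (n - 1) :=
        Nat.mul_le_mul_right _ (by omega)
      have h3 : (m - 1) * (n - 1) < m * n :=
        Nat.mul_lt_mul_of_lt_of_lt (by omega) (by omega)
      simp only [hN]
      omega
    set e : I → ℕ := fun c => N * (m - ((c.1 : ℕ) + 2)) + (c.2 : ℕ) with he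
    have hNpos : 0 < N := by have : 0 < m * n := Nat.mul_pos (by omega) (by omega); omega
    have heinj : Function.Injective e := by
      rintro ⟨k, a⟩ ⟨k', a'⟩ h
      simp only [he] at h
      have ha : (a : ℕ) < N := hbound ⟨k, a⟩
      have ha' : (a' : ℕ) < N := hbound ⟨k', a'⟩
      have hmod : (a : ℕ) = (a' : ℕ) := by
        have := congrArg (· % N) h
        simpa [Nat.mul_add_mod, Nat.mod_eq_of_lt ha, Nat.mod_eq_of_lt ha'] using this
      have hdiv : m - ((k : ℕ) + 2) = m - ((k' : ℕ) + 2) := by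
        have h' : N * (m - ((k : ℕ) + 2)) = N * (m - ((k' : ℕ) + 2)) := by omega
        exact Nat.eq_of_mul_eq_mul_left hNpos h'
      have hk : (k : ℕ) = (k' : ℕ) := by
        have hk2 : (k : ℕ) < m - 1 := k.2
        have hk2' : (k' : ℕ) < m - 1 := k'.2
        omega
      have hkk : k = k' := Fin.ext hk
      subst hkk
      have : a = a' := Fin.ext hmod
      rw [this]
    obtain ⟨x, hx⟩ := exists_points_det_ne_zero (fun c : I => (fun z : ℂ => z ^ (e c)))
      (linearIndependent_pow_fun e heinj)
    refine ⟨x, fun s => x s ^ N, ?_⟩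
    have hMeq : (Matrix.of fun s c : I =>
          (fun s => x s ^ N) s ^ (m - ((c.1 : ℕ) + 2)) * x s ^ (c.2 : ℕ))
        = Matrix.of fun i j : I => (fun z : ℂ => z ^ (e j)) (x i) := by
      ext s c
      simp only [Matrix.of_apply, he]
      rw [← pow_mul, ← pow_add]
    rw [hMeq]
    exact hx
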